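/- Let f : [a,b] → ℝ be differentiable with f' (t) = c(t) h(t) where c(t) > 0 is continuous and h has at most m zeros in [a,b] counted with multiplicity and changes sign at most m times. Then f has at most m+1 zeros in [a,b] counted with multiplicity. -/

import Mathlib

open Set

/-- Generalized Rolle-type bound: if `f' = c·h` with `c > 0` continuous and `h`
continuous with at most `m` zeros in `[a,b]`, then `f` has at most `m+1` zeros in
`[a,b]` counted with multiplicity (a double zero, `f(z) = f'(z) = 0`, counts
twice). -/
theorem stmt_18 (a b : ℝ) (hab : a < b) (m : ℕ) (f c h : ℝ → ℝ)
    (hfd : DifferentiableOn ℝ f (Icc a b))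
    (hcc : ContinuousOn c (Icc a b)) (hcpos : ∀ t ∈ Icc a b, 0 < c t)
    (hhc : ContinuousOn h (Icc a b))
    (hhz : {t ∈ Icc a b | h t = 0}.encard ≤ m)
    (hder : ∀ t ∈ Icc a b, derivWithin f (Icc a b) t = c t * h t) :
    ∀ (S : Finset ℝ) (mult : ℝ → ℕ),
      (∀ t ∈ S, t ∈ Icc a b ∧ f t = 0 ∧ 1 ≤ mult t ∧ mult t ≤ 2 ∧
        (mult t = 2 → derivWithin f (Icc a b) t = 0)) →
      ∑ t ∈ S, mult t ≤ m + 1 := by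
  intro S mult hS
  set Z : Set ℝ := {t ∈ Icc a b | h t = 0} with hZdef
  obtain ⟨hZfin, hZcard⟩ := Set.encard_le_coe_iff_finite_ncard_le.mp hhz
  -- h vanishes at double zeros
  have hdouble : ∀ t ∈ Icc a b, derivWithin f (Icc a b) t = 0 → h t = 0 := by
    intro t ht h0
    have := hder t ht
    rw [h0] at this
    have hc := hcpos t ht
    have := this.symm
    rcases mul_eq_zero.mp this with h1 | h1
    · exact absurd h1 (ne_of_gt hc)
    · exact h1
  -- Rolle: between two zeros of f there is a zero of h
  have rolle : ∀ x y : ℝ, x ∈ Icc a b → y ∈ Icc a b → x < y → f x = 0 → f y = 0 →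
      ∃ z ∈ Ioo x y, h z = 0 := by
    intro x y hx hy hxy hfx hfy
    have hsub : Icc x y ⊆ Icc a b := Icc_subset_Icc hx.1 hy.2
    have hcont : ContinuousOn f (Icc x y) := hfd.continuousOn.mono hsub
    obtain ⟨z, hz, hz0⟩ := exists_deriv_eq_zero hxy hcont (hfx.trans hfy.symm)
    have hzab : z ∈ Ioo a b := ⟨lt_of_le_of_lt hx.1 hz.1, lt_of_lt_of_le hz.2 hy.2⟩
    have hnhds : Icc a b ∈ nhds z := Icc_mem_nhds hzab.1 hzab.2
    have hdw : derivWithin f (Icc a b) z = deriv f z := derivWithin_of_mem_nhds hnhds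
    refine ⟨z, hz, hdouble z (Ioo_subset_Icc_self hzab) (hdw.trans hz0)⟩
  -- main induction
  have key : ∀ k : ℕ, ∀ T : Finset ℝ, T.card ≤ k →
      (∀ t ∈ T, t ∈ Icc a b ∧ f t = 0 ∧ 1 ≤ mult t ∧ mult t ≤ 2 ∧
        (mult t = 2 → derivWithin f (Icc a b) t = 0)) →
      ∀ hne : T.Nonempty, ∑ t ∈ T, mult t ≤ 1 + (Z ∩ Icc (T.min' hne) b).ncard := by
    intro k
    induction k with
    | zero =>
      intro T hcard _ hne
      simp [Finset.card_eq_zero.mp (Nat.le_zero.mp hcard)] at hne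
    | succ k ih =>
      intro T hcard hT hne
      set x := T.min' hne with hxdef
      have hxT : x ∈ T := T.min'_mem hne
      obtain ⟨hxab, hfx, hm1, hm2, hmd⟩ := hT x hxT
      have hsum : ∑ t ∈ T, mult t = mult x + ∑ t ∈ T.erase x, mult t :=
        (Finset.add_sum_erase T mult hxT).symm
      by_cases hT' : (T.erase x).Nonempty
      · set y := (T.erase x).min' hT' with hydef
        have hyT' : y ∈ T.erase x := Finset.min'_mem _ _
        have hyT : y ∈ T := Finset.mem_of_mem_erase hyT'
        obtain ⟨hyab, hfy, _, _, _⟩ := hT y hyT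
        have hxy : x < y :=
          lt_of_le_of_ne (T.min'_le y hyT) (Ne.symm (Finset.ne_of_mem_erase hyT'))
        have hcard' : (T.erase x).card ≤ k := by
          have := Finset.card_erase_of_mem hxT
          omega
        have ihT := ih (T.erase x) hcard'
          (fun t ht => hT t (Finset.mem_of_mem_erase ht)) hT'
        rw [← hydef] at ihT
        obtain ⟨z, hzIoo, hz0⟩ := rolle x y hxab hyab hxy hfx hfy
        have hzab : z ∈ Icc a b := ⟨le_trans hxab.1 (le_of_lt hzIoo.1),
          le_trans (le_of_lt hzIoo.2) hyab.2⟩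
        -- the set W of new zeros in [x, y)
        have hZsplit : (Z ∩ Ico x y) ∪ (Z ∩ Icc y b) ⊆ Z ∩ Icc x b := by
          rintro t (⟨htZ, ht⟩ | ⟨htZ, ht⟩)
          · exact ⟨htZ, ht.1, le_trans (le_of_lt ht.2) hyab.2⟩
          · exact ⟨htZ, le_trans (le_of_lt hxy) ht.1, ht.2⟩
        have hdisj : Disjoint (Z ∩ Ico x y) (Z ∩ Icc y b) := by
          apply Set.disjoint_left.mpr
          rintro t ⟨_, ht1⟩ ⟨_, ht2⟩
          exact absurd ht2.1 (not_le.mpr ht1.2)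
        have hfin1 : (Z ∩ Ico x y).Finite := hZfin.subset inter_subset_left
        have hfin2 : (Z ∩ Icc y b).Finite := hZfin.subset inter_subset_left
        have hunion : (Z ∩ Ico x y).ncard + (Z ∩ Icc y b).ncard ≤ (Z ∩ Icc x b).ncard := by
          rw [← Set.ncard_union_eq hdisj hfin1 hfin2]
          exact Set.ncard_le_ncard hZsplit (hZfin.subset inter_subset_left)
        have hW : mult x ≤ (Z ∩ Ico x y).ncard := by
          have hzW : z ∈ Z ∩ Ico x y :=
            ⟨⟨hzab, hz0⟩, le_of_lt hzIoo.1, hzIoo.2⟩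
          rcases Nat.lt_or_ge (mult x) 2 with hlt | hge
          · have : 0 < (Z ∩ Ico x y).ncard := (Set.ncard_pos hfin1).mpr ⟨z, hzW⟩
            omega
          · have hmx2 : mult x = 2 := le_antisymm hm2 hge
            have hhx : h x = 0 := hdouble x hxab (hmd hmx2)
            have hxW : x ∈ Z ∩ Ico x y := ⟨⟨hxab, hhx⟩, le_refl x, hxy⟩
            have hpair : {x, z} ⊆ Z ∩ Ico x y := by
              rintro t (rfl | rfl)
              exacts [hxW, hzW]
            have : ({x, z} : Set ℝ).ncard ≤ (Z ∩ Ico x y).ncard :=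
              Set.ncard_le_ncard hpair hfin1
            rw [Set.ncard_pair (ne_of_lt hzIoo.1)] at this
            omega
        calc ∑ t ∈ T, mult t = mult x + ∑ t ∈ T.erase x, mult t := hsum
          _ ≤ mult x + (1 + (Z ∩ Icc y b).ncard) := by
              have := ihT
              omega
          _ ≤ 1 + ((Z ∩ Ico x y).ncard + (Z ∩ Icc y b).ncard) := by omega
          _ ≤ 1 + (Z ∩ Icc x b).ncard := by omega
      · -- T = {x}
        have hTx : T = {x} := by
          apply Finset.eq_singleton_iff_unique_mem.mpr
          refine ⟨hxT, fun t ht => ?_⟩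
          by_contra hne'
          exact hT' ⟨t, Finset.mem_erase.mpr ⟨hne', ht⟩⟩
        have hs : ∑ t ∈ T, mult t = mult x := by
          rw [hTx, Finset.sum_singleton]
        rcases Nat.lt_or_ge (mult x) 2 with hlt | hge
        · omega
        · have hmx2 : mult x = 2 := le_antisymm hm2 hge
          have hhx : h x = 0 := hdouble x hxab (hmd hmx2)
          have hxW : x ∈ Z ∩ Icc x b := ⟨⟨hxab, hhx⟩, le_refl x, hxab.2⟩
          have : 0 < (Z ∩ Icc x b).ncard :=
            (Set.ncard_pos (hZfin.subset inter_subset_left)).mpr ⟨x, hxW⟩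
          omega
  rcases S.eq_empty_or_nonempty with rfl | hne
  · simp
  · have := key S.card S le_rfl hS hne
    have hle : (Z ∩ Icc (S.min' hne) b).ncard ≤ Z.ncard :=
      Set.ncard_le_ncard inter_subset_left hZfin
    omega
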